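/- Let Θ be an arbitrary threshold function, let P be associated with Θ through the penalty construction, and let F(B, C) = (1/2)‖Y − XB − C‖_F² + Σ_{i=1}^n P(‖c_i‖₂; λ). Consider the alternating algorithm: C^{(t+1)} = vecΘ(Y − XB^{(t)}; λ) and B^{(t+1)} = R(X, Y − C^{(t+1)}, r), where R(X, Z, r) is a global minimizer of ‖Z − XB‖_F² subject to rank(B) ≤ r. Then for any λ ≥ 0 and r ≥ 0 the iterates satisfy F(B^{(t)}, C^{(t)}) ≥ F(B^{(t+1)}, C^{(t+1)}) for all t, and hence F(B^{(t)}, C^{(t)}) converges as t → ∞. -/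
import Mathlib


open MeasureTheory Matrix Filter
open scoped ENNReal NNReal BigOperators

noncomputable section

namespace RRRStmt

/-- Squared Frobenius norm `‖A‖_F²`. -/
def froSq {n m : ℕ} (A : Matrix (Fin n) (Fin m) ℝ) : ℝ := ∑ i, ∑ j, (A i j) ^ 2

/-- Frobenius norm `‖A‖_F`. -/
def fro {n m : ℕ} (A : Matrix (Fin n) (Fin m) ℝ) : ℝ := Real.sqrt (froSq A)

/-- ℓ₂ norm of the `i`-th row of `A`. -/
def rowNorm {n m : ℕ} (A : Matrix (Fin n) (Fin m) ℝ) (i : Fin n) : ℝ :=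
  Real.sqrt (∑ j, (A i j) ^ 2)

open Classical in
/-- Number of nonzero rows, `‖A‖_{2,0}`. -/
def numNZRows {n m : ℕ} (A : Matrix (Fin n) (Fin m) ℝ) : ℕ :=
  (Finset.univ.filter fun i => A i ≠ 0).card

open Classical in
/-- Row support of `A`: indices of nonzero rows. -/
def rowSupp {n m : ℕ} (A : Matrix (Fin n) (Fin m) ℝ) : Finset (Fin n) :=
  Finset.univ.filter fun i => A i ≠ 0

open Classical in
/-- Number of entries at which two matrices differ, `‖A - B‖₀`. -/
def numDiff {n m : ℕ} (A B : Matrix (Fin n) (Fin m) ℝ) : ℕ :=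
  (Finset.univ.filter fun q : Fin n × Fin m => A q.1 q.2 ≠ B q.1 q.2).card

/-- A threshold function `Θ(t; λ)`: odd, nondecreasing in `t`, tending to `∞`, and with
`0 ≤ Θ(t;λ) ≤ t` for `t ≥ 0`. -/
def IsThresholdFun (Θ : ℝ → ℝ → ℝ) : Prop :=
  (∀ t lam : ℝ, 0 ≤ lam → Θ (-t) lam = -Θ t lam) ∧
  (∀ t t' lam : ℝ, 0 ≤ lam → t ≤ t' → Θ t lam ≤ Θ t' lam) ∧
  (∀ lam : ℝ, 0 ≤ lam → Tendsto (fun t => Θ t lam) atTop atTop) ∧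
  (∀ t lam : ℝ, 0 ≤ lam → 0 ≤ t → 0 ≤ Θ t lam ∧ Θ t lam ≤ t)

/-- `Θ⁻¹(u;λ) = sup {s : Θ(s;λ) ≤ u}`. -/
def ThetaInv (Θ : ℝ → ℝ → ℝ) (lam u : ℝ) : ℝ := sSup {s : ℝ | Θ s lam ≤ u}

/-- `P_Θ(t;λ) = ∫₀^{|t|} (Θ⁻¹(u;λ) - u) du`. -/
def PTheta (Θ : ℝ → ℝ → ℝ) (t lam : ℝ) : ℝ := ∫ u in (0:ℝ)..|t|, (ThetaInv Θ lam u - u)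

/-- The penalty `P` is associated with the threshold `Θ` through the penalty construction:
`P(t;λ) - P(0;λ) = P_Θ(t;λ) + q(t;λ)` for some nonnegative `q` vanishing on the range of `Θ`. -/
def IsPenaltyFor (Θ P : ℝ → ℝ → ℝ) : Prop :=
  ∃ q : ℝ → ℝ → ℝ, (∀ t lam : ℝ, 0 ≤ lam → 0 ≤ q t lam) ∧
    (∀ s lam : ℝ, 0 ≤ lam → q (Θ s lam) lam = 0) ∧
    (∀ t lam : ℝ, 0 ≤ lam → P t lam - P 0 lam = PTheta Θ t lam + q t lam)

/-- Euclidean norm of a vector. -/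
def vnorm {m : ℕ} (a : Fin m → ℝ) : ℝ := Real.sqrt (∑ j, (a j) ^ 2)

open Classical in
/-- Multivariate thresholding `vecΘ(a;λ) = a·Θ(‖a‖₂;λ)/‖a‖₂` (and `0` at `0`). -/
def vecTheta (Θ : ℝ → ℝ → ℝ) (lam : ℝ) {m : ℕ} (a : Fin m → ℝ) : Fin m → ℝ :=
  if a = 0 then 0 else (Θ (vnorm a) lam / vnorm a) • a

/-- Row-wise multivariate thresholding of a matrix. -/
def matTheta (Θ : ℝ → ℝ → ℝ) (lam : ℝ) {n m : ℕ} (A : Matrix (Fin n) (Fin m) ℝ) :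
    Matrix (Fin n) (Fin m) ℝ :=
  Matrix.of fun i => vecTheta Θ lam (A i)

/-- Hard-thresholding penalty `P_H(t;λ)`. -/
def PH (t lam : ℝ) : ℝ := if |t| < lam then -t ^ 2 / 2 + lam * |t| else lam ^ 2 / 2

/-- Law of an `n × m` noise matrix with i.i.d. `N(0, σ²)` entries. -/
def gaussianNoise (n m : ℕ) (σ : ℝ) : Measure (Fin n → Fin m → ℝ) :=
  Measure.pi fun _ => Measure.pi fun _ => ProbabilityTheory.gaussianReal 0 (Real.toNNReal (σ ^ 2))

/-- Robust loss `ρ(t;λ) = ∫₀^{|t|} (u - Θ(u;λ)) du`. -/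
def rho (Θ : ℝ → ℝ → ℝ) (lam t : ℝ) : ℝ := ∫ u in (0:ℝ)..|t|, (u - Θ u lam)


/-- The robust reduced-rank regression objective
`F(B,C) = ½‖Y - XB - C‖_F² + ∑ᵢ P(‖cᵢ‖₂;λ)`. -/
def Fobj {n m p : ℕ} (X : Matrix (Fin n) (Fin p) ℝ) (Y : Matrix (Fin n) (Fin m) ℝ)
    (P : ℝ → ℝ → ℝ) (lam : ℝ) (B : Matrix (Fin p) (Fin m) ℝ)
    (C : Matrix (Fin n) (Fin m) ℝ) : ℝ :=
  (1/2) * froSq (Y - X * B - C) + ∑ i, P (rowNorm C i) lam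

section AuxProofs

variable {Θ P : ℝ → ℝ → ℝ} {lam : ℝ}

lemma theta_zero (hΘ : IsThresholdFun Θ) (hlam : 0 ≤ lam) : Θ 0 lam = 0 := by
  have h := hΘ.1 0 lam hlam
  rw [neg_zero] at h
  linarith

lemma bddAbove_thetaSet (hΘ : IsThresholdFun Θ) (hlam : 0 ≤ lam) (u : ℝ) :
    BddAbove {s : ℝ | Θ s lam ≤ u} := by
  obtain ⟨M, hM⟩ := (tendsto_atTop.1 (hΘ.2.2.1 lam hlam) (u + 1)).exists_forall_of_atTop
  refine ⟨M, fun s hs => ?_⟩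
  by_contra hc
  push_neg at hc
  have := hM s hc.le
  have : Θ s lam ≤ u := hs
  linarith

lemma nonempty_thetaSet (hΘ : IsThresholdFun Θ) (hlam : 0 ≤ lam) {u : ℝ} (hu : 0 ≤ u) :
    Set.Nonempty {s : ℝ | Θ s lam ≤ u} :=
  ⟨u, (hΘ.2.2.2 u lam hlam hu).2⟩

lemma le_thetaInv (hΘ : IsThresholdFun Θ) (hlam : 0 ≤ lam) {s u : ℝ}
    (h : Θ s lam ≤ u) : s ≤ ThetaInv Θ lam u :=
  le_csSup (bddAbove_thetaSet hΘ hlam u) h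

lemma thetaInv_le (hΘ : IsThresholdFun Θ) (hlam : 0 ≤ lam) {s u : ℝ} (hu : 0 ≤ u)
    (h : u < Θ s lam) : ThetaInv Θ lam u ≤ s := by
  refine csSup_le (nonempty_thetaSet hΘ hlam hu) (fun s' hs' => ?_)
  by_contra hc
  push_neg at hc
  have := hΘ.2.1 s s' lam hlam hc.le
  have : Θ s' lam ≤ u := hs'
  linarith

lemma self_le_thetaInv (hΘ : IsThresholdFun Θ) (hlam : 0 ≤ lam) {u : ℝ} (hu : 0 ≤ u) :
    u ≤ ThetaInv Θ lam u :=
  le_thetaInv hΘ hlam (hΘ.2.2.2 u lam hlam hu).2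

lemma thetaInv_monoOn (hΘ : IsThresholdFun Θ) (hlam : 0 ≤ lam) :
    MonotoneOn (ThetaInv Θ lam) (Set.Ici 0) := by
  intro u hu u' _ huu'
  exact csSup_le_csSup (bddAbove_thetaSet hΘ hlam u') (nonempty_thetaSet hΘ hlam hu)
    (fun s hs => le_trans hs huu')

lemma thetaInv_intervalIntegrable (hΘ : IsThresholdFun Θ) (hlam : 0 ≤ lam) {a b : ℝ}
    (ha : 0 ≤ a) (hb : 0 ≤ b) :
    IntervalIntegrable (fun u => ThetaInv Θ lam u - u) volume a b := by
  have hsub : Set.uIcc a b ⊆ Set.Ici 0 := fun x hx => le_trans (le_inf ha hb) hx.1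
  have h1 : IntervalIntegrable (ThetaInv Θ lam) volume a b :=
    ((thetaInv_monoOn hΘ hlam).mono hsub).intervalIntegrable
  exact h1.sub (continuous_id.intervalIntegrable a b)

lemma PTheta_sub (hΘ : IsThresholdFun Θ) (hlam : 0 ≤ lam) {a b : ℝ}
    (ha : 0 ≤ a) (hb : 0 ≤ b) :
    PTheta Θ b lam - PTheta Θ a lam = ∫ u in a..b, (ThetaInv Θ lam u - u) := by
  unfold PTheta
  rw [abs_of_nonneg ha, abs_of_nonneg hb]
  exact intervalIntegral.integral_interval_sub_left
    (thetaInv_intervalIntegrable hΘ hlam le_rfl hb)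
    (thetaInv_intervalIntegrable hΘ hlam le_rfl ha)

lemma PTheta_nonneg (hΘ : IsThresholdFun Θ) (hlam : 0 ≤ lam) (t : ℝ) :
    0 ≤ PTheta Θ t lam := by
  refine intervalIntegral.integral_nonneg (abs_nonneg t) (fun u hu => ?_)
  exact sub_nonneg.2 (self_le_thetaInv hΘ hlam hu.1)

lemma P_zero_le (hΘ : IsThresholdFun Θ) (hP : IsPenaltyFor Θ P) (hlam : 0 ≤ lam) (t : ℝ) :
    P 0 lam ≤ P t lam := by
  obtain ⟨q, hq0, _, hPq⟩ := hP
  have h1 := hPq t lam hlam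
  have h2 := hq0 t lam hlam
  have h3 := PTheta_nonneg hΘ hlam t
  linarith

lemma scalar_key (hΘ : IsThresholdFun Θ) (hlam : 0 ≤ lam) {s v : ℝ}
    (hs : 0 ≤ s) (hv : 0 ≤ v) :
    1/2 * (s - Θ s lam)^2 + PTheta Θ (Θ s lam) lam
      ≤ 1/2 * (s - v)^2 + PTheta Θ v lam := by
  set θ := Θ s lam with hθdef
  have hθ0 : 0 ≤ θ := (hΘ.2.2.2 s lam hlam hs).1
  have hInt : IntervalIntegrable (fun u => ThetaInv Θ lam u - u) volume θ v :=
    thetaInv_intervalIntegrable hΘ hlam hθ0 hv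
  have hg : IntervalIntegrable (fun u : ℝ => u - s) volume θ v :=
    (continuous_id'.sub continuous_const).intervalIntegrable θ v
  have h2 : ∫ u in θ..v, (ThetaInv Θ lam u - s)
      = (∫ u in θ..v, (ThetaInv Θ lam u - u)) + ∫ u in θ..v, (u - s) := by
    rw [← intervalIntegral.integral_add hInt hg]
    congr 1
    funext u
    ring
  have h3 : ∫ u in θ..v, (u - s) = 1/2 * (s - v)^2 - 1/2 * (s - θ)^2 := by
    rw [intervalIntegral.integral_sub (continuous_id'.intervalIntegrable θ v)
      (intervalIntegrable_const)]
    rw [integral_id, intervalIntegral.integral_const]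
    simp only [smul_eq_mul]
    ring
  have h1 := PTheta_sub hΘ hlam hθ0 hv
  have key : 1/2 * (s - v)^2 + PTheta Θ v lam - (1/2 * (s - θ)^2 + PTheta Θ θ lam)
      = ∫ u in θ..v, (ThetaInv Θ lam u - s) := by
    rw [h2, h3]
    linarith
  have hpos : 0 ≤ ∫ u in θ..v, (ThetaInv Θ lam u - s) := by
    rcases le_or_gt θ v with h | h
    · refine intervalIntegral.integral_nonneg h (fun u hu => ?_)
      have hθu : θ ≤ u := hu.1
      exact sub_nonneg.2 (le_thetaInv hΘ hlam hθu)
    · have hflip : ∫ u in θ..v, (ThetaInv Θ lam u - s)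
          = ∫ u in v..θ, (s - ThetaInv Θ lam u) := by
        rw [intervalIntegral.integral_symm, ← intervalIntegral.integral_neg]
        congr 1
        funext u
        ring
      rw [hflip]
      refine intervalIntegral.integral_nonneg_of_ae_restrict h.le ?_
      have hmem : ∀ᵐ u ∂(volume.restrict (Set.Icc v θ)), u ∈ Set.Icc v θ :=
        ae_restrict_mem measurableSet_Icc
      have hgne : ∀ᵐ u : ℝ, u ≠ θ := by
        rw [ae_iff]
        have : {a : ℝ | ¬ a ≠ θ} = {θ} := by ext a; simp
        rw [this]
        exact Real.volume_singleton
      have hne : ∀ᵐ u ∂(volume.restrict (Set.Icc v θ)), u ≠ θ := ae_restrict_of_ae hgne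
      filter_upwards [hmem, hne] with u hu hune
      have hu0 : 0 ≤ u := le_trans hv hu.1
      have hlt : u < θ := lt_of_le_of_ne hu.2 hune
      exact sub_nonneg.2 (thetaInv_le hΘ hlam hu0 hlt)
  linarith

lemma scalar_key_P (hΘ : IsThresholdFun Θ) (hP : IsPenaltyFor Θ P) (hlam : 0 ≤ lam)
    {s v : ℝ} (hs : 0 ≤ s) (hv : 0 ≤ v) :
    1/2 * (s - Θ s lam)^2 + P (Θ s lam) lam
      ≤ 1/2 * (s - v)^2 + P v lam := by
  obtain ⟨q, hq0, hqΘ, hPq⟩ := hP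
  have e1 := hPq (Θ s lam) lam hlam
  have e2 := hPq v lam hlam
  have e3 := hqΘ s lam hlam
  have e4 := hq0 v lam hlam
  have e5 := scalar_key hΘ hlam hs hv
  linarith

lemma vnorm_nonneg {m : ℕ} (a : Fin m → ℝ) : 0 ≤ vnorm a := Real.sqrt_nonneg _

lemma sq_vnorm {m : ℕ} (a : Fin m → ℝ) : (vnorm a)^2 = ∑ j, (a j)^2 :=
  Real.sq_sqrt (Finset.sum_nonneg fun j _ => sq_nonneg _)

lemma vnorm_smul {m : ℕ} (k : ℝ) (a : Fin m → ℝ) : vnorm (k • a) = |k| * vnorm a := by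
  unfold vnorm
  rw [← Real.sqrt_sq_eq_abs, ← Real.sqrt_mul (sq_nonneg k)]
  congr 1
  rw [Finset.mul_sum]
  congr 1
  funext j
  simp [mul_pow]

lemma vec_key (hΘ : IsThresholdFun Θ) (hP : IsPenaltyFor Θ P) (hlam : 0 ≤ lam)
    {m : ℕ} (z c : Fin m → ℝ) :
    1/2 * (∑ j, (z j - vecTheta Θ lam z j)^2) + P (vnorm (vecTheta Θ lam z)) lam
      ≤ 1/2 * (∑ j, (z j - c j)^2) + P (vnorm c) lam := by
  have hs : 0 ≤ vnorm z := vnorm_nonneg z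
  have hv : 0 ≤ vnorm c := vnorm_nonneg c
  have hzz : ∑ j, (z j)^2 = (vnorm z)^2 := (sq_vnorm z).symm
  have hcc : ∑ j, (c j)^2 = (vnorm c)^2 := (sq_vnorm c).symm
  have hcs : ∑ j, z j * c j ≤ vnorm z * vnorm c := by
    have h := Finset.sum_mul_sq_le_sq_mul_sq Finset.univ z c
    rw [hzz, hcc] at h
    nlinarith [h, mul_nonneg hs hv]
  have hub : (vnorm z - vnorm c)^2 ≤ ∑ j, (z j - c j)^2 := by
    have hexp : ∑ j, (z j - c j)^2
        = (∑ j, (z j)^2) - 2 * (∑ j, z j * c j) + ∑ j, (c j)^2 := by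
      rw [Finset.mul_sum, ← Finset.sum_sub_distrib, ← Finset.sum_add_distrib]
      congr 1
      funext j
      ring
    rw [hexp, hzz, hcc]
    nlinarith [hcs]
  by_cases hz : z = 0
  · have hth : vecTheta Θ lam z = 0 := by simp [vecTheta, hz]
    have hs0 : vnorm z = 0 := by simp [hz, vnorm]
    have hkey := scalar_key_P hΘ hP hlam (le_refl (0:ℝ)) hv
    rw [theta_zero hΘ hlam] at hkey
    rw [hth]
    have hz2 : ∑ j, (z j - (0 : Fin m → ℝ) j)^2 = 0 := by simp [hz]
    rw [hz2]
    have hv0 : vnorm (0 : Fin m → ℝ) = 0 := by simp [vnorm]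
    rw [hv0]
    have h0v : (0 - vnorm c)^2 ≤ ∑ j, (z j - c j)^2 := by rw [← hs0]; exact hub
    nlinarith [hkey, h0v]
  · have hspos : 0 < vnorm z := by
      rcases eq_or_lt_of_le hs with h | h
      · exfalso
        apply hz
        have hsum : ∑ j, (z j)^2 = 0 := by rw [hzz, ← h]; ring
        funext j
        have := (Finset.sum_eq_zero_iff_of_nonneg
          (fun j _ => sq_nonneg (z j))).1 hsum j (Finset.mem_univ j)
        exact pow_eq_zero_iff (by norm_num) |>.1 this
      · exact h
    have hθ := hΘ.2.2.2 (vnorm z) lam hlam hs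
    have hk0 : 0 ≤ Θ (vnorm z) lam / vnorm z := div_nonneg hθ.1 hs
    have hks : Θ (vnorm z) lam / vnorm z * vnorm z = Θ (vnorm z) lam :=
      div_mul_cancel₀ _ (ne_of_gt hspos)
    have hnormθ : vnorm (vecTheta Θ lam z) = Θ (vnorm z) lam := by
      rw [vecTheta, if_neg hz, vnorm_smul, abs_of_nonneg hk0, hks]
    have hdiff : ∑ j, (z j - vecTheta Θ lam z j)^2 = (vnorm z - Θ (vnorm z) lam)^2 := by
      simp only [vecTheta, if_neg hz, Pi.smul_apply, smul_eq_mul]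
      have hstep : ∑ j, (z j - Θ (vnorm z) lam / vnorm z * z j)^2
          = (1 - Θ (vnorm z) lam / vnorm z)^2 * ∑ j, (z j)^2 := by
        rw [Finset.mul_sum]
        congr 1
        funext j
        ring
      rw [hstep, hzz]
      nlinarith [hks]
    rw [hnormθ, hdiff]
    exact le_trans (scalar_key_P hΘ hP hlam hs hv) (by nlinarith [hub])

lemma C_step (hΘ : IsThresholdFun Θ) (hP : IsPenaltyFor Θ P) (hlam : 0 ≤ lam)
    {n m p : ℕ} (X : Matrix (Fin n) (Fin p) ℝ) (Y : Matrix (Fin n) (Fin m) ℝ)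
    (B : Matrix (Fin p) (Fin m) ℝ) (C : Matrix (Fin n) (Fin m) ℝ) :
    Fobj X Y P lam B (matTheta Θ lam (Y - X * B)) ≤ Fobj X Y P lam B C := by
  unfold Fobj froSq
  rw [Finset.mul_sum, Finset.mul_sum, ← Finset.sum_add_distrib, ← Finset.sum_add_distrib]
  refine Finset.sum_le_sum (fun i _ => ?_)
  have h := vec_key hΘ hP hlam ((Y - X * B) i) (C i)
  have e1 : ∀ j, (Y - X * B - matTheta Θ lam (Y - X * B)) i j
      = (Y - X * B) i j - vecTheta Θ lam ((Y - X * B) i) j := fun j => rfl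
  have e2 : ∀ j, (Y - X * B - C) i j = (Y - X * B) i j - C i j := fun j => rfl
  simp only [rowNorm]
  calc 1/2 * ∑ j, (Y - X * B - matTheta Θ lam (Y - X * B)) i j ^ 2
        + P (Real.sqrt (∑ j, matTheta Θ lam (Y - X * B) i j ^ 2)) lam
      = 1/2 * (∑ j, ((Y - X * B) i j - vecTheta Θ lam ((Y - X * B) i) j)^2)
        + P (vnorm (vecTheta Θ lam ((Y - X * B) i))) lam := by
        simp only [e1]; rfl
    _ ≤ 1/2 * (∑ j, ((Y - X * B) i j - C i j)^2) + P (vnorm (C i)) lam := h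
    _ = 1/2 * ∑ j, (Y - X * B - C) i j ^ 2 + P (Real.sqrt (∑ j, C i j ^ 2)) lam := by
        simp only [e2]; rfl

end AuxProofs

/-- Theorem 7, descent part: the alternating algorithm
`C^{(t+1)} = vecΘ(Y - XB^{(t)};λ)`, `B^{(t+1)} = R(X, Y - C^{(t+1)}, r)`
never increases the objective `F`, and `F(B^{(t)}, C^{(t)})` converges. -/
theorem algorithm_descent_and_convergence {n m p : ℕ}
    (X : Matrix (Fin n) (Fin p) ℝ) (Y : Matrix (Fin n) (Fin m) ℝ)
    (Θ P : ℝ → ℝ → ℝ) (hΘ : IsThresholdFun Θ) (hP : IsPenaltyFor Θ P)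
    (lam : ℝ) (hlam : 0 ≤ lam) (r : ℕ)
    (Bseq : ℕ → Matrix (Fin p) (Fin m) ℝ) (Cseq : ℕ → Matrix (Fin n) (Fin m) ℝ)
    (hB0 : (Bseq 0).rank ≤ r)
    (hC : ∀ t : ℕ, Cseq (t + 1) = matTheta Θ lam (Y - X * Bseq t))
    (hBrank : ∀ t : ℕ, (Bseq (t + 1)).rank ≤ r)
    (hBmin : ∀ t : ℕ, ∀ B : Matrix (Fin p) (Fin m) ℝ, B.rank ≤ r →
      froSq (Y - Cseq (t + 1) - X * Bseq (t + 1)) ≤ froSq (Y - Cseq (t + 1) - X * B)) :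
    (∀ t : ℕ, Fobj X Y P lam (Bseq (t + 1)) (Cseq (t + 1)) ≤ Fobj X Y P lam (Bseq t) (Cseq t)) ∧
    (∃ l : ℝ, Tendsto (fun t => Fobj X Y P lam (Bseq t) (Cseq t)) atTop (nhds l)) := by
  have hdescent : ∀ t : ℕ,
      Fobj X Y P lam (Bseq (t + 1)) (Cseq (t + 1)) ≤ Fobj X Y P lam (Bseq t) (Cseq t) := by
    intro t
    have hrank_t : (Bseq t).rank ≤ r := by
      cases t with
      | zero => exact hB0
      | succ k => exact hBrank k
    have step1 : Fobj X Y P lam (Bseq t) (Cseq (t + 1)) ≤ Fobj X Y P lam (Bseq t) (Cseq t) := by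
      rw [hC t]
      exact C_step hΘ hP hlam X Y (Bseq t) (Cseq t)
    have step2 : Fobj X Y P lam (Bseq (t + 1)) (Cseq (t + 1))
        ≤ Fobj X Y P lam (Bseq t) (Cseq (t + 1)) := by
      unfold Fobj
      have hq := hBmin t (Bseq t) hrank_t
      have e1 : Y - X * Bseq (t+1) - Cseq (t+1) = Y - Cseq (t+1) - X * Bseq (t+1) :=
        sub_right_comm _ _ _
      have e2 : Y - X * Bseq t - Cseq (t+1) = Y - Cseq (t+1) - X * Bseq t :=
        sub_right_comm _ _ _
      rw [e1, e2]
      linarith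
    exact le_trans step2 step1
  refine ⟨hdescent, ?_⟩
  have hanti : Antitone (fun t => Fobj X Y P lam (Bseq t) (Cseq t)) :=
    antitone_nat_of_succ_le hdescent
  have hbdd : BddBelow (Set.range (fun t => Fobj X Y P lam (Bseq t) (Cseq t))) := by
    refine ⟨(n : ℝ) * P 0 lam, ?_⟩
    rintro x ⟨t, rfl⟩
    unfold Fobj
    have h1 : 0 ≤ froSq (Y - X * Bseq t - Cseq t) :=
      Finset.sum_nonneg fun i _ => Finset.sum_nonneg fun j _ => sq_nonneg _
    have h2 : (n : ℝ) * P 0 lam ≤ ∑ i, P (rowNorm (Cseq t) i) lam := by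
      calc (n : ℝ) * P 0 lam = ∑ _i : Fin n, P 0 lam := by
            rw [Finset.sum_const, Finset.card_univ, Fintype.card_fin, nsmul_eq_mul]
        _ ≤ ∑ i, P (rowNorm (Cseq t) i) lam :=
            Finset.sum_le_sum fun i _ => P_zero_le hΘ hP hlam _
    linarith
  exact ⟨_, tendsto_atTop_ciInf hanti hbdd⟩

end RRRStmt
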